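/- arXiv:1601.05176 — 3 statements merged into one kernel-verified Lean document; each statement's English description precedes it below -/
import Mathlib

section
/- Levi-style decomposition for traces: for all traces x, u, v over a dependency alphabet, if x ⊑ uv then there exist traces x0, x1, x2, x3 such that x = x0·x1, u = x0·x2, v = x1·x3, and x2 I x1 (every letter of x2 is independent of every letter of x1). -/
namespace MazTrace

variable {A : Type*}

/-- Smallest equivalence on words over `A` generated by commuting two adjacent
independent letters (`a I b` iff `¬ D a b`). -/
inductive TraceRel (D : A → A → Prop) : List A → List A → Prop
  | refl (u : List A) : TraceRel D u u
  | swap (u v : List A) (a b : A) (h : ¬ D a b) :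
      TraceRel D (u ++ a :: b :: v) (u ++ b :: a :: v)
  | symm {u v : List A} : TraceRel D u v → TraceRel D v u
  | trans {u v w : List A} : TraceRel D u v → TraceRel D v w → TraceRel D u w

theorem TraceRel.append_right {D : A → A → Prop} {u u' : List A} (w : List A)
    (h : TraceRel D u u') : TraceRel D (u ++ w) (u' ++ w) := by
  induction h with
  | refl u => exact .refl _
  | swap x y a b hab =>
      simpa [List.append_assoc] using TraceRel.swap (D := D) x (y ++ w) a b hab
  | symm _ ih => exact ih.symm
  | trans _ _ ih1 ih2 => exact ih1.trans ih2

theorem TraceRel.append_left {D : A → A → Prop} {v v' : List A} (w : List A)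
    (h : TraceRel D v v') : TraceRel D (w ++ v) (w ++ v') := by
  induction h with
  | refl u => exact .refl _
  | swap x y a b hab =>
      simpa [List.append_assoc] using TraceRel.swap (D := D) (w ++ x) y a b hab
  | symm _ ih => exact ih.symm
  | trans _ _ ih1 ih2 => exact ih1.trans ih2

def traceSetoid (D : A → A → Prop) : Setoid (List A) :=
  ⟨TraceRel D, ⟨TraceRel.refl, TraceRel.symm, TraceRel.trans⟩⟩

/-- A Mazurkiewicz trace: an equivalence class of words. -/
def Trace (D : A → A → Prop) : Type _ := Quotient (traceSetoid D)

namespace Trace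

variable {D : A → A → Prop}

/-- The trace of a word. -/
def mk (D : A → A → Prop) (u : List A) : Trace D := Quotient.mk (traceSetoid D) u

/-- The empty trace. -/
instance : One (Trace D) := ⟨mk D []⟩

/-- Concatenation of traces, induced by concatenation of words. -/
instance : Mul (Trace D) :=
  ⟨fun s t => Quotient.liftOn₂ s t (fun u v => mk D (u ++ v))
    (fun _ _ _ _ hu hv =>
      Quotient.sound ((hu.append_right _).trans (TraceRel.append_left _ hv)))⟩

instance : Nonempty (Trace D) := ⟨1⟩

/-- Length of a trace: the length of any of its linearizations. -/
def length (t : Trace D) : ℕ :=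
  Quotient.liftOn t List.length (by
    intro u v h
    induction h with
    | refl u => rfl
    | swap x y a b hab => simp
    | symm _ ih => exact ih.symm
    | trans _ _ ih1 ih2 => exact ih1.trans ih2)

/-- The set of letters of a trace. -/
def alph (t : Trace D) : Set A :=
  Quotient.liftOn t (fun u => {a | a ∈ u}) (by
    intro u v h
    induction h with
    | refl u => rfl
    | swap x y a b hab => ext c; simp [List.mem_append]; tauto
    | symm _ ih => exact ih.symm
    | trans _ _ ih1 ih2 => exact ih1.trans ih2)

/-- Prefix order on traces: `s ⊑ t` iff `s * w = t` for some trace `w`. -/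
def Prefix (s t : Trace D) : Prop := ∃ w, s * w = t

/-- `t I B` : every letter of the trace `t` is independent of every element of `B`. -/
def IndepSet (t : Trace D) (B : Set A) : Prop := ∀ a ∈ t.alph, ∀ b ∈ B, ¬ D a b

/-- `s I t` : every letter of `s` is independent of every letter of `t`. -/
def Indep (s t : Trace D) : Prop := ∀ a ∈ s.alph, ∀ b ∈ t.alph, ¬ D a b

/-- `a I t` : the letter `a` is independent of every letter of the trace `t`. -/
def IndepLetter (a : A) (t : Trace D) : Prop := ∀ c ∈ t.alph, ¬ D a c

/-- `w` is the `B`-view of `t`: the shortest prefix of `t` such that `t = w·v`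
for some trace `v` with `v I B`. -/
def IsView (B : Set A) (t w : Trace D) : Prop :=
  (∃ v, w * v = t ∧ v.IndepSet B) ∧
  ∀ w' v', w' * v' = t → v'.IndepSet B → w.length ≤ w'.length

/-- The `B`-view of a trace. -/
noncomputable def view (B : Set A) (t : Trace D) : Trace D :=
  Classical.epsilon (IsView B t)

/-- A trace is `B`-prime if every linearization of it ends with a letter of `B`. -/
def IsBPrime (B : Set A) (t : Trace D) : Prop :=
  ∀ u : List A, mk D u = t → ∀ a : A, u.getLast? = some a → a ∈ B

/-- A trace is prime if all its linearizations have the same last letter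
(the empty trace counts as prime). -/
def IsPrime (t : Trace D) : Prop :=
  ∀ u v : List A, mk D u = t → mk D v = t → u.getLast? = v.getLast?

end Trace


section Aux
variable {D : A → A → Prop}

def Step (D : A → A → Prop) (u v : List A) : Prop :=
  ∃ p q a b, ¬ D a b ∧ u = p ++ a :: b :: q ∧ v = p ++ b :: a :: q

theorem traceRel_to_chain (hs : ∀ a b, D a b → D b a) {u v : List A}
    (h : TraceRel D u v) : Relation.ReflTransGen (Step D) u v := by
  induction h with
  | refl u => exact .refl
  | swap x y a b hab => exact Relation.ReflTransGen.single ⟨x, y, a, b, hab, rfl, rfl⟩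
  | symm _ ih =>
      refine (@Relation.ReflTransGen.stdSymm _ (Step D) ⟨?_⟩).symm _ _ ih
      rintro w w' ⟨p, q, a, b, hab, rfl, rfl⟩
      exact ⟨p, q, b, a, fun hba => hab (hs _ _ hba), rfl, rfl⟩
  | trans _ _ ih1 ih2 => exact ih1.trans ih2

theorem TraceRel.mem_iff {u v : List A} (h : TraceRel D u v) (b : A) :
    b ∈ u ↔ b ∈ v := by
  induction h with
  | refl u => rfl
  | swap x y a b hab => simp [List.mem_append]; tauto
  | symm _ ih => exact ih.symm
  | trans _ _ ih1 ih2 => exact ih1.trans ih2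

theorem shift (a : A) : ∀ (l : List A), (∀ b ∈ l, ¬ D a b) → ∀ m : List A,
    TraceRel D (a :: (l ++ m)) (l ++ a :: m) := by
  intro l
  induction l with
  | nil => intro _ m; exact .refl _
  | cons b l ih =>
      intro hl m
      have h1 : TraceRel D (a :: b :: (l ++ m)) (b :: a :: (l ++ m)) :=
        TraceRel.swap [] (l ++ m) a b (hl b (by simp))
      have h2 : TraceRel D (b :: (a :: (l ++ m))) (b :: (l ++ a :: m)) := by
        simpa using TraceRel.append_left [b] (ih (fun c hc => hl c (by simp [hc])) m)
      exact h1.trans h2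

theorem firstLetter (hs : ∀ a b, D a b → D b a) {a : A} {m n : List A}
    (h : TraceRel D (a :: m) n) :
    ∃ n1 n2, n = n1 ++ a :: n2 ∧ (∀ b ∈ n1, ¬ D a b) ∧ TraceRel D m (n1 ++ n2) := by
  have hc := traceRel_to_chain hs h
  clear h
  induction hc with
  | refl => exact ⟨[], m, rfl, by simp, .refl _⟩
  | tail _ hstep ih =>
      obtain ⟨n1, n2, rfl, hind, hm⟩ := ih
      obtain ⟨p, q, e, f, hef, heq, rfl⟩ := hstep
      rcases List.append_eq_append_iff.mp heq with ⟨t, rfl, ht⟩ | ⟨t, rfl, ht⟩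
      · -- p = n1 ++ t, a :: n2 = t ++ e :: f :: q
        rcases t with _ | ⟨a', t'⟩
        · simp only [List.nil_append, List.cons.injEq] at ht
          obtain ⟨rfl, rfl⟩ := ht
          refine ⟨n1 ++ [f], q, by simp, ?_, by simpa using hm⟩
          intro b hb
          rcases (by simpa using hb : b ∈ n1 ∨ b = f) with hb | rfl
          · exact hind b hb
          · exact hef
        · simp only [List.cons_append, List.cons.injEq] at ht
          obtain ⟨rfl, rfl⟩ := ht
          refine ⟨n1, t' ++ f :: e :: q, by simp, hind, ?_⟩
          refine hm.trans ?_
          simpa [List.append_assoc] using TraceRel.swap (D := D) (n1 ++ t') q e f hef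
      · -- n1 = p ++ t, e :: f :: q = t ++ a :: n2
        rcases t with _ | ⟨e1, t⟩
        · simp only [List.nil_append, List.cons.injEq] at ht
          obtain ⟨rfl, rfl⟩ := ht
          refine ⟨p ++ [f], q, by simp, ?_, by simpa using hm⟩
          intro b hb
          rcases (by simpa using hb : b ∈ p ∨ b = f) with hb | rfl
          · exact hind b (by simp [hb])
          · exact hef
        · simp only [List.cons_append, List.cons.injEq] at ht
          obtain ⟨rfl, ht⟩ := ht
          rcases t with _ | ⟨f1, t'⟩
          · simp only [List.nil_append, List.cons.injEq] at ht
            obtain ⟨rfl, rfl⟩ := ht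
            refine ⟨p, e :: q, by simp, ?_, by simpa using hm⟩
            intro b hb
            exact hind b (by simp [hb])
          · simp only [List.cons_append, List.cons.injEq] at ht
            obtain ⟨rfl, rfl⟩ := ht
            refine ⟨p ++ f :: e :: t', n2, by simp, ?_, ?_⟩
            · intro b hb
              refine hind b ?_
              simp only [List.mem_append, List.mem_cons] at hb ⊢
              tauto
            · refine hm.trans ?_
              simpa [List.append_assoc] using
                TraceRel.swap (D := D) p (t' ++ n2) e f hef

theorem levi_words (hs : ∀ a b, D a b → D b a) :
    ∀ (u v x y : List A), TraceRel D (u ++ v) (x ++ y) →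
    ∃ p q r s : List A, TraceRel D u (p ++ q) ∧ TraceRel D v (r ++ s) ∧
      TraceRel D x (p ++ r) ∧ TraceRel D y (q ++ s) ∧
      (∀ a ∈ q, ∀ b ∈ r, ¬ D a b) := by
  intro u
  induction u with
  | nil =>
      intro v x y h
      exact ⟨[], [], x, y, .refl _, by simpa using h, .refl _, .refl _, by simp⟩
  | cons a u ih =>
      intro v x y h
      obtain ⟨n1, n2, hn, hind, hm⟩ :=
        firstLetter hs (show TraceRel D (a :: (u ++ v)) (x ++ y) by simpa using h)
      rcases List.append_eq_append_iff.mp hn with ⟨t, rfl, rfl⟩ | ⟨t, rfl, ht⟩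
      · -- a occurs in y : n1 = x ++ t, y = t ++ a :: n2
        obtain ⟨p, q, r, s, hu, hv, hx, hy2, hqr⟩ :=
          ih v x (t ++ n2) (by simpa [List.append_assoc] using hm)
        have hax : ∀ b ∈ x, ¬ D a b := fun b hb => hind b (by simp [hb])
        have hat : ∀ b ∈ t, ¬ D a b := fun b hb => hind b (by simp [hb])
        have hap : ∀ b ∈ p, ¬ D a b := fun b hb =>
          hax b ((hx.mem_iff b).mpr (by simp [hb]))
        have har : ∀ b ∈ r, ¬ D a b := fun b hb =>
          hax b ((hx.mem_iff b).mpr (by simp [hb]))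
        refine ⟨p, a :: q, r, s, ?_, hv, hx, ?_, ?_⟩
        · have h1 : TraceRel D (a :: u) (a :: (p ++ q)) := by
            simpa using TraceRel.append_left [a] hu
          exact h1.trans (shift a p hap q)
        · have h1 : TraceRel D (t ++ a :: n2) (a :: (t ++ n2)) := (shift a t hat n2).symm
          have h2 : TraceRel D (a :: (t ++ n2)) (a :: (q ++ s)) := by
            simpa using TraceRel.append_left [a] hy2
          exact h1.trans h2
        · intro c hc b hb
          rcases List.mem_cons.mp hc with rfl | hc
          · exact har b hb
          · exact hqr c hc b hb
      · rcases t with _ | ⟨a', t'⟩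
        · -- x = n1 ++ [], y = a :: n2
          simp only [List.nil_append] at ht
          subst ht
          obtain ⟨p, q, r, s, hu, hv, hx, hy2, hqr⟩ :=
            ih v (n1 ++ []) n2 (by simpa using hm)
          have hax : ∀ b ∈ n1 ++ ([] : List A), ¬ D a b := fun b hb =>
            hind b (by simpa using hb)
          have hap : ∀ b ∈ p, ¬ D a b := fun b hb =>
            hax b ((hx.mem_iff b).mpr (by simp [hb]))
          have har : ∀ b ∈ r, ¬ D a b := fun b hb =>
            hax b ((hx.mem_iff b).mpr (by simp [hb]))
          refine ⟨p, a :: q, r, s, ?_, hv, hx, ?_, ?_⟩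
          · have h1 : TraceRel D (a :: u) (a :: (p ++ q)) := by
              simpa using TraceRel.append_left [a] hu
            exact h1.trans (shift a p hap q)
          · simpa using TraceRel.append_left [a] hy2
          · intro c hc b hb
            rcases List.mem_cons.mp hc with rfl | hc
            · exact har b hb
            · exact hqr c hc b hb
        · -- a occurs in x : x = n1 ++ a :: t'
          simp only [List.cons_append, List.cons.injEq] at ht
          obtain ⟨rfl, rfl⟩ := ht
          obtain ⟨p, q, r, s, hu, hv, hx, hy, hqr⟩ :=
            ih v (n1 ++ t') y (by simpa [List.append_assoc] using hm)
          refine ⟨a :: p, q, r, s, ?_, hv, ?_, hy, hqr⟩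
          · simpa using TraceRel.append_left [a] hu
          · have h1 : TraceRel D (n1 ++ a :: t') (a :: (n1 ++ t')) :=
              (shift a n1 hind t').symm
            have h2 : TraceRel D (a :: (n1 ++ t')) (a :: (p ++ r)) := by
              simpa using TraceRel.append_left [a] hx
            exact h1.trans h2

end Aux


end MazTrace

open MazTrace in
/-- Levi-style decomposition for traces: if `x ⊑ uv` then there exist
`x0, x1, x2, x3` with `x = x0·x1`, `u = x0·x2`, `v = x1·x3` and `x2 I x1`. -/
theorem trace_levi_decomposition {A : Type*} [Finite A] (D : A → A → Prop)
    (hrefl : ∀ a, D a a) (hsymm : ∀ a b, D a b → D b a)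
    (x u v : Trace D) (h : x.Prefix (u * v)) :
    ∃ x0 x1 x2 x3 : Trace D,
      x = x0 * x1 ∧ u = x0 * x2 ∧ v = x1 * x3 ∧ x2.Indep x1 := by
  obtain ⟨w, hw⟩ := h
  obtain ⟨x', rfl⟩ := Quotient.exists_rep x
  obtain ⟨u', rfl⟩ := Quotient.exists_rep u
  obtain ⟨v', rfl⟩ := Quotient.exists_rep v
  obtain ⟨w', rfl⟩ := Quotient.exists_rep w
  have hrel : TraceRel D (x' ++ w') (u' ++ v') := Quotient.exact hw
  obtain ⟨p, q, r, s, hx, hwrel, hu, hv, hqr⟩ := levi_words hsymm x' w' u' v' hrel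
  refine ⟨Trace.mk D p, Trace.mk D q, Trace.mk D r, Trace.mk D s, ?_, ?_, ?_, ?_⟩
  · exact Quotient.sound hx
  · exact Quotient.sound hu
  · exact Quotient.sound hv
  · intro b hb c hc hD
    exact hqr c hc b hb (hsymm _ _ hD)
end

section
/- For every subset B ⊆ A and all traces u, v, w over a dependency alphabet: if uw ⊑ view_B(uv), then w ⊑ view_B(v). -/
namespace MazTrace

section Aux

variable {A : Type*} {D : A → A → Prop}

open Classical

/-- Projection of a word to the letters `a`, `b`. -/
noncomputable def proj (D : A → A → Prop) (a b : A) (u : List A) : List A :=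
  u.filter (fun x => decide (x = a ∨ x = b))

theorem proj_append (a b : A) (u v : List A) :
    proj D a b (u ++ v) = proj D a b u ++ proj D a b v := by
  simp [proj]

theorem proj_nil (a b : A) : proj D a b ([] : List A) = [] := rfl

theorem proj_cons (a b c : A) (u : List A) :
    proj D a b (c :: u) =
      if c = a ∨ c = b then c :: proj D a b u else proj D a b u := by
  simp only [proj, List.filter_cons]
  by_cases h : c = a ∨ c = b <;> simp [h]

theorem mem_of_mem_proj {a b c : A} {u : List A} (h : c ∈ proj D a b u) :
    c ∈ u ∧ (c = a ∨ c = b) := by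
  have := List.mem_filter.mp h
  simpa using this

theorem mem_proj {a b c : A} {u : List A} (h : c ∈ u) (hc : c = a ∨ c = b) :
    c ∈ proj D a b u :=
  List.mem_filter.mpr ⟨h, by simpa using hc⟩

theorem proj_eq_of_rel (hsymm : ∀ a b, D a b → D b a) {u v : List A}
    (h : TraceRel D u v) {a b : A} (hab : D a b) :
    proj D a b u = proj D a b v := by
  induction h with
  | refl u => rfl
  | swap x y c d hcd =>
      simp only [proj_append]
      congr 1
      by_cases hc : c = a ∨ c = b <;> by_cases hd : d = a ∨ d = b <;>
        simp only [proj_cons, hc, hd, if_pos, if_neg, if_true, if_false]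
      have hcd' : c = d := by
        rcases hc with rfl | rfl <;> rcases hd with rfl | rfl
        · rfl
        · exact absurd hab hcd
        · exact absurd (hsymm _ _ hab) hcd
        · rfl
      rw [hcd']
  | symm _ ih => exact ih.symm
  | trans _ _ ih1 ih2 => exact ih1.trans ih2

/-- First occurrence decomposition. -/
theorem first_occ {a : A} : ∀ {l : List A}, a ∈ l → ∃ s t, l = s ++ a :: t ∧ a ∉ s := by
  intro l
  induction l with
  | nil => intro h; cases h
  | cons c l' ih =>
      intro h
      by_cases hca : c = a
      · exact ⟨[], l', by rw [hca]; rfl, by simp⟩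
      · have : a ∈ l' := by
          rcases List.mem_cons.mp h with h1 | h1
          · exact absurd h1.symm hca
          · exact h1
        obtain ⟨s, t, rfl, hns⟩ := ih this
        exact ⟨c :: s, t, rfl, by
          intro hmem
          rcases List.mem_cons.mp hmem with h1 | h1
          · exact hca h1.symm
          · exact hns h1⟩

/-- If `a` is independent of everything in `z`, we can move it across. -/
theorem rel_comm_letter (a : A) {z : List A} (hI : ∀ c ∈ z, ¬ D a c) :
    TraceRel D (a :: z) (z ++ [a]) := by
  induction z with
  | nil => exact .refl _
  | cons c z' ih =>
      have h1 : TraceRel D (a :: c :: z') (c :: a :: z') := by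
        simpa using TraceRel.swap (D := D) [] z' a c (hI c (by simp))
      have h2 : TraceRel D (c :: (a :: z')) (c :: (z' ++ [a])) := by
        simpa using TraceRel.append_left (D := D) [c]
          (ih (fun d hd => hI d (by simp [hd])))
      exact h1.trans h2

theorem rel_of_proj (hrefl : ∀ a, D a a) (hsymm : ∀ a b, D a b → D b a) :
    ∀ (u v : List A), (∀ a b, D a b → proj D a b u = proj D a b v) →
      TraceRel D u v := by
  intro u
  induction u with
  | nil =>
      intro v h
      cases v with
      | nil => exact .refl _
      | cons c v' =>
          exfalso
          have h1 := h c c (hrefl c)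
          rw [proj_cons, if_pos (Or.inl rfl)] at h1
          exact absurd h1.symm (by simp [proj_nil])
  | cons c u' ih =>
      intro v h
      have hcv : c ∈ v := by
        have h1 := h c c (hrefl c)
        rw [proj_cons, if_pos (Or.inl rfl)] at h1
        have : c ∈ proj D c c v := by rw [← h1]; simp
        exact (mem_of_mem_proj this).1
      obtain ⟨y, z, rfl, hcy⟩ := first_occ hcv
      have hyI : ∀ d ∈ y, ¬ D c d := by
        intro d hd hDcd
        have hne : d ≠ c := fun e => hcy (e ▸ hd)
        have h1 := h c d hDcd
        rw [proj_cons, if_pos (Or.inl rfl), proj_append, proj_cons,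
          if_pos (Or.inl rfl)] at h1
        have hdp : d ∈ proj D c d y := mem_proj hd (Or.inr rfl)
        cases hpy : proj D c d y with
        | nil => rw [hpy] at hdp; cases hdp
        | cons e l =>
            rw [hpy] at h1
            have hce : c = e := by
              have := congrArg (fun l => l.head?) h1
              simpa using this
            have : e ∈ y := (mem_of_mem_proj (hpy ▸ (show e ∈ e :: l from List.mem_cons_self))).1
            exact hcy (hce ▸ this)
      have hv2 : TraceRel D (y ++ c :: z) (c :: (y ++ z)) := by
        have h1 := TraceRel.append_right (D := D) z
          (rel_comm_letter c (fun d hd => hyI d hd))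
        have h2 : TraceRel D (c :: (y ++ z)) (y ++ c :: z) := by
          simpa [List.append_assoc] using h1
        exact h2.symm
      have hproj' : ∀ a b, D a b → proj D a b u' = proj D a b (y ++ z) := by
        intro a b hab
        have h1 := h a b hab
        have h2 := proj_eq_of_rel hsymm hv2 hab
        rw [h2] at h1
        rw [proj_cons, proj_cons] at h1
        by_cases hc2 : c = a ∨ c = b
        · rw [if_pos hc2, if_pos hc2] at h1
          exact List.tail_eq_of_cons_eq h1
        · rw [if_neg hc2, if_neg hc2] at h1
          exact h1
      have hmain : TraceRel D u' (y ++ z) := ih (y ++ z) hproj'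
      have : TraceRel D (c :: u') (c :: (y ++ z)) := by
        simpa using TraceRel.append_left (D := D) [c] hmain
      exact this.trans hv2.symm

namespace Trace

theorem mk_mul_mk (u v : List A) : mk D u * mk D v = mk D (u ++ v) := rfl

theorem sound' {u v : List A} (h : TraceRel D u v) : mk D u = mk D v :=
  Quotient.sound h

theorem exact' {u v : List A} (h : mk D u = mk D v) : TraceRel D u v :=
  Quotient.exact h

theorem exists_mk (t : Trace D) : ∃ u, mk D u = t :=
  Quotient.inductionOn t fun u => ⟨u, rfl⟩

theorem mul_assoc' (s t r : Trace D) : s * t * r = s * (t * r) := by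
  obtain ⟨x, rfl⟩ := exists_mk s
  obtain ⟨y, rfl⟩ := exists_mk t
  obtain ⟨z, rfl⟩ := exists_mk r
  show mk D ((x ++ y) ++ z) = mk D (x ++ (y ++ z))
  rw [List.append_assoc]

theorem one_eq : (1 : Trace D) = mk D [] := rfl

theorem mul_one' (t : Trace D) : t * 1 = t := by
  obtain ⟨x, rfl⟩ := exists_mk t
  show mk D (x ++ []) = mk D x
  rw [List.append_nil]

theorem length_mk (u : List A) : (mk D u).length = u.length := rfl

theorem length_mul (s t : Trace D) : (s * t).length = s.length + t.length := by
  obtain ⟨x, rfl⟩ := exists_mk s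
  obtain ⟨y, rfl⟩ := exists_mk t
  show (x ++ y).length = x.length + y.length
  rw [List.length_append]

theorem length_eq_zero {t : Trace D} (h : t.length = 0) : t = 1 := by
  obtain ⟨x, rfl⟩ := exists_mk t
  have : x = [] := List.length_eq_zero_iff.mp h
  rw [this]; rfl

theorem mem_alph_mk {a : A} {u : List A} : a ∈ (mk D u).alph ↔ a ∈ u := Iff.rfl

theorem mul_left_cancel' (hrefl : ∀ a, D a a) (hsymm : ∀ a b, D a b → D b a)
    {t u v : Trace D} (h : t * u = t * v) : u = v := by
  obtain ⟨x, rfl⟩ := exists_mk t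
  obtain ⟨y, rfl⟩ := exists_mk u
  obtain ⟨z, rfl⟩ := exists_mk v
  have h1 : TraceRel D (x ++ y) (x ++ z) := exact' h
  apply sound'
  apply rel_of_proj hrefl hsymm
  intro a b hab
  have := proj_eq_of_rel hsymm h1 hab
  rw [proj_append, proj_append] at this
  exact List.append_cancel_left this

theorem indepSet_mul {s t : Trace D} {B : Set A} :
    (s * t).IndepSet B ↔ s.IndepSet B ∧ t.IndepSet B := by
  obtain ⟨x, rfl⟩ := exists_mk s
  obtain ⟨y, rfl⟩ := exists_mk t
  constructor
  · intro h
    exact ⟨fun a ha b hb => h a (mem_alph_mk.mpr (by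
        simpa using Or.inl (mem_alph_mk.mp ha))) b hb,
      fun a ha b hb => h a (mem_alph_mk.mpr (by
        simpa using Or.inr (mem_alph_mk.mp ha))) b hb⟩
  · rintro ⟨h1, h2⟩ a ha b hb
    rcases List.mem_append.mp (mem_alph_mk.mp ha) with h3 | h3
    · exact h1 a (mem_alph_mk.mpr h3) b hb
    · exact h2 a (mem_alph_mk.mpr h3) b hb

theorem one_indepSet {B : Set A} : (1 : Trace D).IndepSet B := by
  intro a ha
  exact absurd (mem_alph_mk.mp ha) List.not_mem_nil

/-- Word-level last-letter decomposition. -/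
theorem last_decomp (hrefl : ∀ a, D a a) (hsymm : ∀ a b, D a b → D b a)
    {u w : List A} {a : A} (h : TraceRel D (u ++ [a]) w) :
    ∃ w₁ w₂, w = w₁ ++ a :: w₂ ∧ (∀ c ∈ w₂, ¬ D a c) ∧
      TraceRel D u (w₁ ++ w₂) := by
  have hproj : ∀ b c, D b c → proj D b c (u ++ [a]) = proj D b c w :=
    fun b c hbc => proj_eq_of_rel hsymm h hbc
  have haw : a ∈ w := by
    have h1 := hproj a a (hrefl a)
    have : a ∈ proj D a a w := by
      rw [← h1, proj_append]
      simp [proj_cons, proj_nil]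
    exact (mem_of_mem_proj this).1
  obtain ⟨s, t, hrev, hns⟩ := first_occ (l := w.reverse) (by simpa using haw)
  have hw : w = t.reverse ++ a :: s.reverse := by
    have := congrArg List.reverse hrev
    simpa using this
  set w₁ := t.reverse with hw₁
  set w₂ := s.reverse with hw₂
  have hanw2 : a ∉ w₂ := by simpa [hw₂] using hns
  have hI : ∀ c ∈ w₂, ¬ D a c := by
    intro c hc hac
    have h1 := hproj a c hac
    rw [hw] at h1
    rw [proj_append, proj_append, proj_cons, proj_cons, proj_nil,
      if_pos (Or.inl rfl), if_pos (Or.inl rfl)] at h1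
    have hcp : c ∈ proj D a c w₂ := mem_proj hc (Or.inr rfl)
    have hne2 : proj D a c w₂ ≠ [] := fun e => by rw [e] at hcp; cases hcp
    have hlast : (proj D a c w₂).getLast? = some a := by
      have h2 := congrArg List.getLast? h1
      rw [List.getLast?_concat, List.getLast?_append_cons,
        show (a :: proj D a c w₂) = [a] ++ proj D a c w₂ from rfl,
        List.getLast?_append_of_ne_nil _ hne2] at h2
      exact h2.symm
    have hmem : a ∈ proj D a c w₂ := by
      obtain ⟨hne3, he⟩ := List.mem_getLast?_eq_getLast
        (l := proj D a c w₂) (x := a) (Option.mem_def.mpr hlast)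
      have hm := List.getLast_mem hne3
      rwa [← he] at hm
    exact hanw2 (mem_of_mem_proj hmem).1
  refine ⟨w₁, w₂, hw, hI, ?_⟩
  apply rel_of_proj hrefl hsymm
  intro b c hbc
  have h1 := hproj b c hbc
  rw [hw] at h1
  rw [proj_append, proj_append, proj_cons, proj_cons, proj_nil] at h1
  rw [proj_append]
  by_cases hb : a = b ∨ a = c
  · have hw2e : proj D b c w₂ = [] := by
      rw [proj, List.filter_eq_nil_iff]
      intro x hx
      simp only [decide_eq_true_eq]
      intro hor
      rcases hor with rfl | rfl <;> rcases hb with rfl | rfl <;>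
        first
          | exact hanw2 hx
          | exact hI _ hx (hsymm _ _ hbc)
          | exact hI _ hx hbc
    rw [if_pos hb, if_pos hb, hw2e] at h1
    rw [hw2e, List.append_nil]
    exact List.append_cancel_right h1
  · rw [if_neg hb, if_neg hb, List.append_nil] at h1
    exact h1

/-- Last-letter Levi lemma at the trace level. -/
theorem last_levi (hrefl : ∀ a, D a a) (hsymm : ∀ a b, D a b → D b a)
    {z x y : Trace D} {a : A} (h : z * mk D [a] = x * y) :
    (∃ y', y = y' * mk D [a] ∧ z = x * y') ∨
    (∃ x', x = x' * mk D [a] ∧ z = x' * y) := by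
  obtain ⟨zu, rfl⟩ := exists_mk z
  obtain ⟨xu, rfl⟩ := exists_mk x
  obtain ⟨yu, rfl⟩ := exists_mk y
  have h1 : TraceRel D (zu ++ [a]) (xu ++ yu) := exact' h
  obtain ⟨w₁, w₂, heq, hIw, hrel⟩ := last_decomp hrefl hsymm h1
  rcases List.append_eq_append_iff.mp heq with ⟨a', ha1, ha2⟩ | ⟨c', hc1, hc2⟩
  · -- w₁ = xu ++ a', yu = a' ++ a :: w₂
    left
    refine ⟨mk D (a' ++ w₂), ?_, ?_⟩
    · rw [ha2]
      apply sound'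
      have : TraceRel D (a :: w₂) (w₂ ++ [a]) := rel_comm_letter a hIw
      have h2 := TraceRel.append_left (D := D) a' this
      simpa [List.append_assoc] using h2
    · apply sound'
      have : TraceRel D zu (w₁ ++ w₂) := hrel
      rw [ha1] at this
      simpa [List.append_assoc] using this
  · -- xu = w₁ ++ c', a :: w₂ = c' ++ yu
    cases c' with
    | nil =>
        left
        simp only [List.append_nil] at hc1
        simp only [List.nil_append] at hc2
        refine ⟨mk D w₂, ?_, ?_⟩
        · rw [← hc2]
          exact sound' (rel_comm_letter a hIw)
        · rw [hc1]
          exact sound' hrel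
    | cons a0 c'' =>
        have ha0 : a0 = a := by
          have := congrArg (fun l => l.head?) hc2
          simpa using this.symm
        subst ha0
        have hw2 : w₂ = c'' ++ yu := by
          have := congrArg (fun l => l.tail) hc2
          simpa using this
        right
        refine ⟨mk D (w₁ ++ c''), ?_, ?_⟩
        · rw [hc1]
          apply sound'
          have : TraceRel D (a0 :: c'') (c'' ++ [a0]) :=
            rel_comm_letter a0 (fun d hd => hIw d (by rw [hw2]; simp [hd]))
          have h2 := TraceRel.append_left (D := D) w₁ this
          simpa [List.append_assoc] using h2
        · apply sound'
          have : TraceRel D zu (w₁ ++ w₂) := hrel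
          rw [hw2] at this
          simpa [List.append_assoc] using this

theorem exists_isView (B : Set A) (t : Trace D) : ∃ m, IsView B t m := by
  classical
  have hex : ∃ n, ∃ m r, m * r = t ∧ r.IndepSet B ∧ length m = n :=
    ⟨t.length, t, 1, mul_one' t, one_indepSet, rfl⟩
  obtain ⟨m, r, hmr, hr, hlen⟩ := Nat.find_spec hex
  refine ⟨m, ⟨r, hmr, hr⟩, ?_⟩
  intro w' v' hw hv
  rw [hlen]
  exact Nat.find_min' hex ⟨w', v', hw, hv, rfl⟩

theorem isView_view (B : Set A) (t : Trace D) : IsView B t (Trace.view B t) :=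
  Classical.epsilon_spec (exists_isView B t)

/-- Minimal-length factorization prefixes are prefix-minimum. -/
theorem view_prefix_min (hrefl : ∀ a, D a a) (hsymm : ∀ a b, D a b → D b a)
    {B : Set A} {t m r : Trace D}
    (hmr : m * r = t) (hr : r.IndepSet B)
    (hmin : ∀ w' v', w' * v' = t → v'.IndepSet B → m.length ≤ w'.length) :
    ∀ q p, p * q = t → q.IndepSet B → m.Prefix p := by
  suffices H : ∀ n q p, length q = n → p * q = t → q.IndepSet B → m.Prefix p by
    intro q p h1 h2; exact H q.length q p rfl h1 h2
  intro n
  induction n with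
  | zero =>
      intro q p hq hpq hqI
      have hq1 : q = 1 := length_eq_zero hq
      subst hq1
      rw [mul_one'] at hpq
      exact ⟨r, by rw [hpq]; exact hmr⟩
  | succ n ih =>
      intro q p hq hpq hqI
      obtain ⟨ql, rfl⟩ := exists_mk q
      cases ql with
      | nil => exact absurd hq (by simp [length_mk])
      | cons a q0 =>
          have hsplit : mk D (a :: q0) = mk D [a] * mk D q0 := rfl
          have hpq' : (p * mk D [a]) * mk D q0 = t := by
            rw [mul_assoc', ← hsplit]; exact hpq
          have hq0I : (mk D q0).IndepSet B := by
            intro c hc b hb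
            exact hqI c (mem_alph_mk.mpr (List.mem_cons_of_mem a
              (mem_alph_mk.mp hc))) b hb
          have hq0len : length (mk D q0) = n := by
            have : length (mk D (a :: q0)) = n + 1 := hq
            simpa [length_mk] using this
          obtain ⟨s, hs⟩ := ih (mk D q0) (p * mk D [a]) hq0len hpq' hq0I
          rcases last_levi hrefl hsymm hs.symm with ⟨y', hy', hz⟩ | ⟨x', hx', hz⟩
          · exact ⟨y', hz.symm⟩
          · exfalso
            have haI : (mk D [a]).IndepSet B := by
              intro c hc b hb
              have : c = a := by
                have := mem_alph_mk.mp hc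
                simpa using this
              subst this
              exact hqI c (mem_alph_mk.mpr (show c ∈ c :: q0 from List.mem_cons_self)) b hb
            have hir : (mk D [a] * r).IndepSet B := indepSet_mul.mpr ⟨haI, hr⟩
            have hfac : x' * (mk D [a] * r) = t := by
              rw [← mul_assoc', ← hx', hmr]
            have hle := hmin x' _ hfac hir
            rw [hx', length_mul] at hle
            simp [length_mk] at hle

end Trace

end Aux

end MazTrace

open MazTrace in
/-- If `uw ⊑ view_B(uv)` then `w ⊑ view_B(v)`. -/
theorem prefix_view_cancel {A : Type*} [Finite A] (D : A → A → Prop)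
    (hrefl : ∀ a, D a a) (hsymm : ∀ a b, D a b → D b a)
    (B : Set A) (u v w : Trace D)
    (h : (u * w).Prefix (Trace.view B (u * v))) : w.Prefix (Trace.view B v) := by
  obtain ⟨⟨R, hR1, hR2⟩, hMmin⟩ := Trace.isView_view (D := D) B (u * v)
  obtain ⟨⟨r', hr'1, hr'2⟩, -⟩ := Trace.isView_view (D := D) B v
  have hfac : (u * Trace.view B v) * r' = u * v := by
    rw [Trace.mul_assoc', hr'1]
  have h1 : (Trace.view B (u * v)).Prefix (u * Trace.view B v) :=
    Trace.view_prefix_min hrefl hsymm hR1 hR2 hMmin r' (u * Trace.view B v)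
      hfac hr'2
  obtain ⟨s1, hs1⟩ := h
  obtain ⟨s2, hs2⟩ := h1
  refine ⟨s1 * s2, ?_⟩
  apply Trace.mul_left_cancel' hrefl hsymm (t := u)
  calc u * (w * (s1 * s2)) = (u * w * s1) * s2 := by
        rw [Trace.mul_assoc', Trace.mul_assoc']
   _ = Trace.view B (u * v) * s2 := by rw [hs1]
   _ = u * Trace.view B v := hs2
end

section
/- Let B ⊆ A, let a ∈ A, and let u, v, w be traces over a dependency alphabet such that the trace ua is prime. Then uav ⊑ view_B(uavw) if and only if av ⊑ view_B(avw). -/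
namespace MazTrace

section Aux

variable {A : Type*} {D : A → A → Prop}

/-- Projection of a word to the letters `c`, `d`. -/
noncomputable def projW (c d : A) (u : List A) : List A :=
  u.filter (fun x => @decide (x = c ∨ x = d) (Classical.propDecidable _))

theorem projW_nil (c d : A) : projW c d ([] : List A) = [] := rfl

theorem projW_append (c d : A) (u v : List A) :
    projW c d (u ++ v) = projW c d u ++ projW c d v := List.filter_append _ _

theorem projW_cons_pos {c d e : A} (h : e = c ∨ e = d) (u : List A) :
    projW c d (e :: u) = e :: projW c d u := by
  simp [projW, List.filter_cons, h]

theorem projW_cons_neg {c d e : A} (h : ¬ (e = c ∨ e = d)) (u : List A) :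
    projW c d (e :: u) = projW c d u := by
  simp [projW, List.filter_cons, h]

theorem mem_projW {c d e : A} {u : List A} :
    e ∈ projW c d u ↔ e ∈ u ∧ (e = c ∨ e = d) := by
  simp [projW, List.mem_filter]

theorem projW_traceRel (hsymm : ∀ a b, D a b → D b a) {c d : A} (hcd : D c d)
    {u v : List A} (h : TraceRel D u v) : projW c d u = projW c d v := by
  induction h with
  | refl u => rfl
  | swap x y a b hab =>
      rcases eq_or_ne a b with rfl | hne
      · rfl
      · simp only [projW_append]
        congr 1
        by_cases ha : a = c ∨ a = d
        · by_cases hb : b = c ∨ b = d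
          · exfalso
            obtain rfl | rfl := ha <;> obtain rfl | rfl := hb
            · exact hne rfl
            · exact hab hcd
            · exact hab (hsymm _ _ hcd)
            · exact hne rfl
          · rw [projW_cons_pos ha, projW_cons_neg hb, projW_cons_neg hb, projW_cons_pos ha]
        · by_cases hb : b = c ∨ b = d
          · rw [projW_cons_neg ha, projW_cons_pos hb, projW_cons_pos hb, projW_cons_neg ha]
          · rw [projW_cons_neg ha, projW_cons_neg hb, projW_cons_neg hb, projW_cons_neg ha]
  | symm _ ih => exact ih.symm
  | trans _ _ ih1 ih2 => exact ih1.trans ih2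

theorem exists_first_split {c : A} {v : List A} (hv : c ∈ v) :
    ∃ s t, v = s ++ c :: t ∧ c ∉ s := by
  induction v with
  | nil => cases hv
  | cons e v ih =>
      by_cases he : c = e
      · exact ⟨[], v, by simp [he], by simp⟩
      · have hv' : c ∈ v := by
          rcases List.mem_cons.mp hv with h | h
          · exact absurd h he
          · exact h
        obtain ⟨s, t, rfl, hs⟩ := ih hv'
        exact ⟨e :: s, t, rfl, by simp [he, hs]⟩

theorem traceRel_commute_cons {c : A} (t : List A) :
    ∀ {s : List A}, (∀ e ∈ s, ¬ D e c) → TraceRel D (s ++ c :: t) (c :: (s ++ t)) := by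
  intro s
  induction s with
  | nil => intro _; exact TraceRel.refl _
  | cons e s ih =>
      intro h
      have h1 : TraceRel D (s ++ c :: t) (c :: (s ++ t)) :=
        ih (fun x hx => h x (by simp [hx]))
      have h2 : TraceRel D (e :: (s ++ c :: t)) (e :: c :: (s ++ t)) := by
        simpa using TraceRel.append_left [e] h1
      have h3 : TraceRel D ([] ++ e :: c :: (s ++ t)) ([] ++ c :: e :: (s ++ t)) :=
        TraceRel.swap [] (s ++ t) e c (h e (by simp))
      exact h2.trans (by simpa using h3)

theorem projW_head_eq {c e : A} {s : List A} (hc : c ∉ s) (he : e ∈ s) :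
    ∃ rest, projW c e s = e :: rest := by
  induction s with
  | nil => cases he
  | cons f s ih =>
      by_cases hf : f = c ∨ f = e
      · rcases hf with rfl | rfl
        · exact absurd (List.mem_cons_self) hc
        · exact ⟨_, projW_cons_pos (Or.inr rfl) s⟩
      · have he' : e ∈ s := by
          rcases List.mem_cons.mp he with rfl | h
          · exact absurd (Or.inr rfl) hf
          · exact h
        have hc' : c ∉ s := fun h' => hc (by simp [h'])
        obtain ⟨r, hr⟩ := ih hc' he'
        exact ⟨r, by rw [projW_cons_neg hf, hr]⟩

theorem exists_append_of_projW_prefix (hrefl : ∀ a, D a a) (hsymm : ∀ a b, D a b → D b a) :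
    ∀ (t : List A) {s : List A},
      (∀ c d, D c d → projW c d s <+: projW c d t) → ∃ x, TraceRel D (s ++ x) t := by
  intro t
  induction t with
  | nil =>
      intro s hs
      have hnil : s = [] := by
        rw [List.eq_nil_iff_forall_not_mem]
        intro e he
        have h1 := hs e e (hrefl e)
        rw [projW_nil, List.prefix_nil] at h1
        have h2 : e ∈ projW e e s := mem_projW.mpr ⟨he, Or.inl rfl⟩
        rw [h1] at h2
        exact List.not_mem_nil h2
      refine ⟨[], ?_⟩
      rw [hnil]
      exact TraceRel.refl _
  | cons c t' ih =>
      intro s hs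
      by_cases hcs : c ∈ s
      · obtain ⟨s₁, s₂, rfl, hc1⟩ := exists_first_split hcs
        have hind : ∀ e ∈ s₁, ¬ D e c := by
          intro e he hDec
          have hce : D c e := hsymm _ _ hDec
          obtain ⟨r, hr⟩ := projW_head_eq hc1 he
          have hp := hs c e hce
          simp only [projW_append, hr, projW_cons_pos (Or.inl rfl), List.cons_append] at hp
          have := (List.cons_prefix_cons.mp hp).1
          exact hc1 (by rw [← this]; exact he)
        have hrel : TraceRel D (s₁ ++ c :: s₂) (c :: (s₁ ++ s₂)) :=
          traceRel_commute_cons s₂ hind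
        have hproj : ∀ cc dd, D cc dd → projW cc dd (s₁ ++ s₂) <+: projW cc dd t' := by
          intro cc dd hdep
          have hps := hs cc dd hdep
          rw [projW_traceRel hsymm hdep hrel] at hps
          by_cases hc : c = cc ∨ c = dd
          · simp only [projW_cons_pos hc] at hps
            exact (List.cons_prefix_cons.mp hps).2
          · simp only [projW_cons_neg hc] at hps
            exact hps
        obtain ⟨x, hx⟩ := ih hproj
        refine ⟨x, ?_⟩
        have h1 : TraceRel D ((s₁ ++ c :: s₂) ++ x) ((c :: (s₁ ++ s₂)) ++ x) :=
          TraceRel.append_right x hrel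
        have h2 : TraceRel D ((c :: (s₁ ++ s₂)) ++ x) (c :: t') := by
          simpa using TraceRel.append_left [c] hx
        exact h1.trans h2
      · have hind : ∀ e ∈ s, ¬ D e c := by
          intro e he hDec
          have hce : D c e := hsymm _ _ hDec
          obtain ⟨r, hr⟩ := projW_head_eq hcs he
          have hp := hs c e hce
          rw [hr, projW_cons_pos (Or.inl rfl)] at hp
          have := (List.cons_prefix_cons.mp hp).1
          exact hcs (by rw [← this]; exact he)
        have hproj : ∀ cc dd, D cc dd → projW cc dd s <+: projW cc dd t' := by
          intro cc dd hdep
          have hps := hs cc dd hdep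
          by_cases hc : c = cc ∨ c = dd
          · rw [projW_cons_pos hc] at hps
            cases hq : projW cc dd s with
            | nil => exact List.nil_prefix
            | cons f fs =>
                rw [hq] at hps
                have hf := (List.cons_prefix_cons.mp hps).1
                have hmem : f ∈ s := by
                  have : f ∈ projW cc dd s := by rw [hq]; exact List.mem_cons_self
                  exact (mem_projW.mp this).1
                exact absurd (by rw [← hf]; exact hmem) hcs
          · rw [projW_cons_neg hc] at hps
            exact hps
        obtain ⟨x, hx⟩ := ih hproj
        refine ⟨c :: x, ?_⟩
        have h1 : TraceRel D (s ++ c :: x) (c :: (s ++ x)) := traceRel_commute_cons x hind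
        have h2 : TraceRel D (c :: (s ++ x)) (c :: t') := by
          simpa using TraceRel.append_left [c] hx
        exact h1.trans h2

theorem traceRel_of_projW_eq (hrefl : ∀ a, D a a) (hsymm : ∀ a b, D a b → D b a) :
    ∀ (u : List A) {v : List A},
      (∀ c d, D c d → projW c d u = projW c d v) → TraceRel D u v := by
  intro u
  induction u with
  | nil =>
      intro v h
      have hnil : v = [] := by
        rw [List.eq_nil_iff_forall_not_mem]
        intro e he
        have h1 := (h e e (hrefl e)).symm
        rw [projW_nil] at h1
        have h2 : e ∈ projW e e v := mem_projW.mpr ⟨he, Or.inl rfl⟩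
        rw [h1] at h2
        exact List.not_mem_nil h2
      rw [hnil]
      exact TraceRel.refl _
  | cons c u' ih =>
      intro v h
      have hcv : c ∈ v := by
        have h1 := h c c (hrefl c)
        rw [projW_cons_pos (Or.inl rfl)] at h1
        have : c ∈ projW c c v := by rw [← h1]; exact List.mem_cons_self
        exact (mem_projW.mp this).1
      obtain ⟨s, t2, rfl, hcs⟩ := exists_first_split hcv
      have hind : ∀ e ∈ s, ¬ D e c := by
        intro e he hDec
        have hce : D c e := hsymm _ _ hDec
        obtain ⟨r, hr⟩ := projW_head_eq hcs he
        have h1 := h c e hce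
        simp only [projW_cons_pos (Or.inl rfl), projW_append, hr, List.cons_append] at h1
        have : c = e := by simpa using congrArg List.head? h1
        exact hcs (by rw [← this] at he; exact he)
      have hrel : TraceRel D (s ++ c :: t2) (c :: (s ++ t2)) := traceRel_commute_cons t2 hind
      have hproj : ∀ cc dd, D cc dd → projW cc dd u' = projW cc dd (s ++ t2) := by
        intro cc dd hdep
        have h1 := h cc dd hdep
        rw [projW_traceRel hsymm hdep hrel] at h1
        by_cases hc : c = cc ∨ c = dd
        · simp only [projW_cons_pos hc] at h1
          injection h1
        · simp only [projW_cons_neg hc] at h1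
          exact h1
      have hmain := ih hproj
      have h2 : TraceRel D (c :: u') (c :: (s ++ t2)) := by
        simpa using TraceRel.append_left [c] hmain
      exact h2.trans hrel.symm

theorem exists_meetW (hsymm : ∀ a b, D a b → D b a) :
    ∀ (t : List A) {z x : List A},
      (∀ c d, D c d → projW c d z <+: projW c d t) →
      (∀ c d, D c d → projW c d x <+: projW c d t) →
      ∃ m : List A, ∀ c d, D c d →
        (projW c d m <+: projW c d z ∧ projW c d m <+: projW c d x) ∧
        (projW c d m = projW c d z ∨ projW c d m = projW c d x) := by
  intro t
  induction t with
  | nil =>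
      intro z x hz hx
      refine ⟨[], fun c d hcd => ?_⟩
      have h1 := hz c d hcd
      rw [projW_nil, List.prefix_nil] at h1
      exact ⟨⟨by rw [projW_nil]; exact List.nil_prefix,
              by rw [projW_nil]; exact List.nil_prefix⟩,
             Or.inl (by rw [projW_nil, h1])⟩
  | cons c t' ih =>
      intro z x hz hx
      -- helper facts for a word not containing c
      have hnilOf : ∀ {s : List A}, c ∉ s →
          (∀ cc dd, D cc dd → projW cc dd s <+: projW cc dd (c :: t')) →
          (∀ cc dd, D cc dd → (c = cc ∨ c = dd) → projW cc dd s = []) := by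
        intro s hcs hsp cc dd hdep hc
        have h0 := hsp cc dd hdep
        rw [projW_cons_pos hc] at h0
        cases hq : projW cc dd s with
        | nil => rfl
        | cons f fs =>
            rw [hq] at h0
            have hf := (List.cons_prefix_cons.mp h0).1
            have hmem : f ∈ s := by
              have : f ∈ projW cc dd s := by rw [hq]; exact List.mem_cons_self
              exact (mem_projW.mp this).1
            exact absurd (by rw [← hf]; exact hmem) hcs
      have hstripOf : ∀ {s : List A}, c ∉ s →
          (∀ cc dd, D cc dd → projW cc dd s <+: projW cc dd (c :: t')) →
          (∀ cc dd, D cc dd → projW cc dd s <+: projW cc dd t') := by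
        intro s hcs hsp cc dd hdep
        by_cases hc : c = cc ∨ c = dd
        · rw [hnilOf hcs hsp cc dd hdep hc]; exact List.nil_prefix
        · have h0 := hsp cc dd hdep
          rw [projW_cons_neg hc] at h0
          exact h0
      by_cases hcz : c ∈ z
      · obtain ⟨z₁, z₂, rfl, hz1⟩ := exists_first_split hcz
        have hindz : ∀ e ∈ z₁, ¬ D e c := by
          intro e he hDec
          have hce : D c e := hsymm _ _ hDec
          obtain ⟨r, hr⟩ := projW_head_eq hz1 he
          have hp := hz c e hce
          simp only [projW_append, hr, projW_cons_pos (Or.inl rfl), List.cons_append] at hp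
          have := (List.cons_prefix_cons.mp hp).1
          exact hz1 (by rw [← this]; exact he)
        have hrelz : TraceRel D (z₁ ++ c :: z₂) (c :: (z₁ ++ z₂)) :=
          traceRel_commute_cons z₂ hindz
        have hz' : ∀ cc dd, D cc dd → projW cc dd (z₁ ++ z₂) <+: projW cc dd t' := by
          intro cc dd hdep
          have hps := hz cc dd hdep
          rw [projW_traceRel hsymm hdep hrelz] at hps
          by_cases hc : c = cc ∨ c = dd
          · simp only [projW_cons_pos hc] at hps
            exact (List.cons_prefix_cons.mp hps).2
          · simp only [projW_cons_neg hc] at hps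
            exact hps
        by_cases hcx : c ∈ x
        · obtain ⟨x₁, x₂, rfl, hx1⟩ := exists_first_split hcx
          have hindx : ∀ e ∈ x₁, ¬ D e c := by
            intro e he hDec
            have hce : D c e := hsymm _ _ hDec
            obtain ⟨r, hr⟩ := projW_head_eq hx1 he
            have hp := hx c e hce
            simp only [projW_append, hr, projW_cons_pos (Or.inl rfl), List.cons_append] at hp
            have := (List.cons_prefix_cons.mp hp).1
            exact hx1 (by rw [← this]; exact he)
          have hrelx : TraceRel D (x₁ ++ c :: x₂) (c :: (x₁ ++ x₂)) :=
            traceRel_commute_cons x₂ hindx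
          have hx' : ∀ cc dd, D cc dd → projW cc dd (x₁ ++ x₂) <+: projW cc dd t' := by
            intro cc dd hdep
            have hps := hx cc dd hdep
            rw [projW_traceRel hsymm hdep hrelx] at hps
            by_cases hc : c = cc ∨ c = dd
            · simp only [projW_cons_pos hc] at hps
              exact (List.cons_prefix_cons.mp hps).2
            · simp only [projW_cons_neg hc] at hps
              exact hps
          obtain ⟨m', hm'⟩ := ih hz' hx'
          refine ⟨c :: m', fun cc dd hcd => ?_⟩
          obtain ⟨⟨hp1, hp2⟩, hd⟩ := hm' cc dd hcd
          have heqz := projW_traceRel hsymm hcd hrelz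
          have heqx := projW_traceRel hsymm hcd hrelx
          by_cases hc : c = cc ∨ c = dd
          · simp only [heqz, heqx, projW_cons_pos hc]
            refine ⟨⟨List.cons_prefix_cons.mpr ⟨rfl, hp1⟩,
                     List.cons_prefix_cons.mpr ⟨rfl, hp2⟩⟩, ?_⟩
            rcases hd with hd | hd
            · exact Or.inl (by rw [hd])
            · exact Or.inr (by rw [hd])
          · simp only [heqz, heqx, projW_cons_neg hc]
            exact ⟨⟨hp1, hp2⟩, hd⟩
        · have hxnil := hnilOf hcx hx
          have hx' := hstripOf hcx hx
          obtain ⟨m', hm'⟩ := ih hz' hx'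
          refine ⟨m', fun cc dd hcd => ?_⟩
          obtain ⟨⟨hp1, hp2⟩, hd⟩ := hm' cc dd hcd
          have heqz := projW_traceRel hsymm hcd hrelz
          by_cases hc : c = cc ∨ c = dd
          · have hxn := hxnil cc dd hcd hc
            have hmn : projW cc dd m' = [] := by
              rw [hxn] at hp2
              exact List.prefix_nil.mp hp2
            exact ⟨⟨by rw [hmn]; exact List.nil_prefix,
                    by rw [hmn]; exact List.nil_prefix⟩,
                   Or.inr (by rw [hmn, hxn])⟩
          · refine ⟨⟨?_, hp2⟩, ?_⟩
            · rw [heqz, projW_cons_neg hc]; exact hp1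
            · rcases hd with hd | hd
              · exact Or.inl (by rw [heqz, projW_cons_neg hc]; exact hd)
              · exact Or.inr hd
      · have hznil := hnilOf hcz hz
        have hz' := hstripOf hcz hz
        by_cases hcx : c ∈ x
        · obtain ⟨x₁, x₂, rfl, hx1⟩ := exists_first_split hcx
          have hindx : ∀ e ∈ x₁, ¬ D e c := by
            intro e he hDec
            have hce : D c e := hsymm _ _ hDec
            obtain ⟨r, hr⟩ := projW_head_eq hx1 he
            have hp := hx c e hce
            simp only [projW_append, hr, projW_cons_pos (Or.inl rfl), List.cons_append] at hp
            have := (List.cons_prefix_cons.mp hp).1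
            exact hx1 (by rw [← this]; exact he)
          have hrelx : TraceRel D (x₁ ++ c :: x₂) (c :: (x₁ ++ x₂)) :=
            traceRel_commute_cons x₂ hindx
          have hx' : ∀ cc dd, D cc dd → projW cc dd (x₁ ++ x₂) <+: projW cc dd t' := by
            intro cc dd hdep
            have hps := hx cc dd hdep
            rw [projW_traceRel hsymm hdep hrelx] at hps
            by_cases hc : c = cc ∨ c = dd
            · simp only [projW_cons_pos hc] at hps
              exact (List.cons_prefix_cons.mp hps).2
            · simp only [projW_cons_neg hc] at hps
              exact hps
          obtain ⟨m', hm'⟩ := ih hz' hx'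
          refine ⟨m', fun cc dd hcd => ?_⟩
          obtain ⟨⟨hp1, hp2⟩, hd⟩ := hm' cc dd hcd
          have heqx := projW_traceRel hsymm hcd hrelx
          by_cases hc : c = cc ∨ c = dd
          · have hzn := hznil cc dd hcd hc
            have hmn : projW cc dd m' = [] := by
              rw [hzn] at hp1
              exact List.prefix_nil.mp hp1
            exact ⟨⟨by rw [hmn]; exact List.nil_prefix,
                    by rw [hmn]; exact List.nil_prefix⟩,
                   Or.inl (by rw [hmn, hzn])⟩
          · refine ⟨⟨hp1, ?_⟩, ?_⟩
            · rw [heqx, projW_cons_neg hc]; exact hp2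
            · rcases hd with hd | hd
              · exact Or.inl hd
              · exact Or.inr (by rw [heqx, projW_cons_neg hc]; exact hd)
        · have hx' := hstripOf hcx hx
          obtain ⟨m', hm'⟩ := ih hz' hx'
          exact ⟨m', hm'⟩

theorem mk_mul (u v : List A) :
    Trace.mk D u * Trace.mk D v = Trace.mk D (u ++ v) := rfl

theorem exists_mk (t : Trace D) : ∃ l, Trace.mk D l = t :=
  ⟨Quotient.out t, Quotient.out_eq t⟩

theorem mk_eq_mk {u v : List A} :
    Trace.mk D u = Trace.mk D v ↔ TraceRel D u v :=
  ⟨fun h => Quotient.exact h, fun h => Quotient.sound h⟩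

theorem trace_mul_assoc (s t r : Trace D) : s * t * r = s * (t * r) := by
  obtain ⟨ls, rfl⟩ := exists_mk s
  obtain ⟨lt, rfl⟩ := exists_mk t
  obtain ⟨lr, rfl⟩ := exists_mk r
  rw [mk_mul, mk_mul, mk_mul, mk_mul, List.append_assoc]

theorem trace_one_def : (1 : Trace D) = Trace.mk D [] := rfl

theorem trace_mul_one (t : Trace D) : t * 1 = t := by
  obtain ⟨l, rfl⟩ := exists_mk t
  rw [trace_one_def, mk_mul, List.append_nil]

theorem trace_one_mul (t : Trace D) : 1 * t = t := by
  obtain ⟨l, rfl⟩ := exists_mk t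
  rw [trace_one_def, mk_mul, List.nil_append]

theorem length_mk (u : List A) : (Trace.mk D u).length = u.length := rfl

theorem mem_alph_mk {a : A} {u : List A} : a ∈ (Trace.mk D u).alph ↔ a ∈ u := Iff.rfl

theorem prefix_iff_projW (hrefl : ∀ a, D a a) (hsymm : ∀ a b, D a b → D b a)
    {s t : List A} :
    (Trace.mk D s).Prefix (Trace.mk D t) ↔
      ∀ c d, D c d → projW c d s <+: projW c d t := by
  constructor
  · rintro ⟨w, hw⟩
    obtain ⟨lw, rfl⟩ := exists_mk w
    rw [mk_mul] at hw
    intro c d hcd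
    have h1 := projW_traceRel hsymm hcd (mk_eq_mk.mp hw)
    rw [projW_append] at h1
    exact ⟨projW c d lw, h1⟩
  · intro h
    obtain ⟨x, hx⟩ := exists_append_of_projW_prefix hrefl hsymm t h
    exact ⟨Trace.mk D x, by rw [mk_mul]; exact mk_eq_mk.mpr hx⟩

theorem mk_eq_iff_projW (hrefl : ∀ a, D a a) (hsymm : ∀ a b, D a b → D b a)
    {s t : List A} :
    Trace.mk D s = Trace.mk D t ↔ ∀ c d, D c d → projW c d s = projW c d t :=
  ⟨fun h c d hcd => projW_traceRel hsymm hcd (mk_eq_mk.mp h),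
   fun h => mk_eq_mk.mpr (traceRel_of_projW_eq hrefl hsymm s h)⟩

theorem mul_left_cancel' (hrefl : ∀ a, D a a) (hsymm : ∀ a b, D a b → D b a)
    {u x y : Trace D} (h : u * x = u * y) : x = y := by
  obtain ⟨lu, rfl⟩ := exists_mk u
  obtain ⟨lx, rfl⟩ := exists_mk x
  obtain ⟨ly, rfl⟩ := exists_mk y
  rw [mk_mul, mk_mul] at h
  rw [mk_eq_iff_projW hrefl hsymm] at h ⊢
  intro c d hcd
  have h1 := h c d hcd
  rw [projW_append, projW_append] at h1
  exact List.append_cancel_left h1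

theorem prefix_mul_left_iff (hrefl : ∀ a, D a a) (hsymm : ∀ a b, D a b → D b a)
    {u x y : Trace D} : (u * x).Prefix (u * y) ↔ x.Prefix y := by
  constructor
  · rintro ⟨w, hw⟩
    rw [trace_mul_assoc] at hw
    exact ⟨w, mul_left_cancel' hrefl hsymm hw⟩
  · rintro ⟨w, hw⟩
    exact ⟨w, by rw [trace_mul_assoc, hw]⟩

theorem prefix_trans {s t r : Trace D} (h1 : s.Prefix t) (h2 : t.Prefix r) :
    s.Prefix r := by
  obtain ⟨w1, hw1⟩ := h1
  obtain ⟨w2, hw2⟩ := h2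
  exact ⟨w1 * w2, by rw [← trace_mul_assoc, hw1, hw2]⟩

theorem length_mul (s t : Trace D) : (s * t).length = s.length + t.length := by
  obtain ⟨ls, rfl⟩ := exists_mk s
  obtain ⟨lt, rfl⟩ := exists_mk t
  rw [mk_mul, length_mk, length_mk, length_mk, List.length_append]

theorem eq_one_of_length_eq_zero {t : Trace D} (h : t.length = 0) : t = 1 := by
  obtain ⟨l, rfl⟩ := exists_mk t
  rw [length_mk] at h
  rw [List.length_eq_zero_iff.mp h]
  rfl

theorem mem_alph_mul {e : A} {s t : Trace D} :
    e ∈ (s * t).alph ↔ e ∈ s.alph ∨ e ∈ t.alph := by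
  obtain ⟨ls, rfl⟩ := exists_mk s
  obtain ⟨lt, rfl⟩ := exists_mk t
  rw [mk_mul]
  simp only [mem_alph_mk, List.mem_append]

theorem alph_subset_of_prefix {s t : Trace D} (h : s.Prefix t) : s.alph ⊆ t.alph := by
  obtain ⟨w, hw⟩ := h
  intro e he
  rw [← hw]
  exact mem_alph_mul.mpr (Or.inl he)

theorem commute_of_indep (hrefl : ∀ a, D a a) (hsymm : ∀ a b, D a b → D b a)
    {s t : Trace D} (h : Trace.Indep s t) : s * t = t * s := by
  obtain ⟨ls, rfl⟩ := exists_mk s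
  obtain ⟨lt, rfl⟩ := exists_mk t
  rw [mk_mul, mk_mul, mk_eq_iff_projW hrefl hsymm]
  intro c d hcd
  rw [projW_append, projW_append]
  have key : projW c d ls = [] ∨ projW c d lt = [] := by
    by_contra hk
    push_neg at hk
    obtain ⟨e, he⟩ := List.exists_mem_of_ne_nil _ hk.1
    obtain ⟨f, hf⟩ := List.exists_mem_of_ne_nil _ hk.2
    obtain ⟨he1, he2⟩ := mem_projW.mp he
    obtain ⟨hf1, hf2⟩ := mem_projW.mp hf
    have hnd : ¬ D e f := h e (mem_alph_mk.mpr he1) f (mem_alph_mk.mpr hf1)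
    refine hnd ?_
    rcases he2 with h1 | h1 <;> rcases hf2 with h2 | h2 <;> rw [h1, h2]
    · exact hrefl c
    · exact hcd
    · exact hsymm _ _ hcd
    · exact hrefl d
  rcases key with hk | hk <;> simp [hk]

theorem indepSet_one (B : Set A) : (1 : Trace D).IndepSet B := by
  intro a ha
  exact absurd (mem_alph_mk.mp ha) List.not_mem_nil

theorem trace_levi (hrefl : ∀ a, D a a) (hsymm : ∀ a b, D a b → D b a)
    {x y u z : Trace D} (h0 : x * y = u * z) :
    ∃ n w₂ w₃ w₄ : Trace D, x = n * w₂ ∧ u = n * w₃ ∧ y = w₃ * w₄ ∧ z = w₂ * w₄ ∧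
      Trace.Indep w₂ w₃ := by
  obtain ⟨lx, rfl⟩ := exists_mk x
  obtain ⟨ly, rfl⟩ := exists_mk y
  obtain ⟨lu, rfl⟩ := exists_mk u
  obtain ⟨lz, rfl⟩ := exists_mk z
  have h := h0
  rw [mk_mul, mk_mul, mk_eq_iff_projW hrefl hsymm] at h
  have hE : ∀ c d, D c d → projW c d lx ++ projW c d ly = projW c d lu ++ projW c d lz := by
    intro c d hcd
    have h1 := h c d hcd
    rwa [projW_append, projW_append] at h1
  have hxp : ∀ c d, D c d → projW c d lx <+: projW c d (lx ++ ly) := by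
    intro c d hcd
    rw [projW_append]
    exact List.prefix_append _ _
  have hup : ∀ c d, D c d → projW c d lu <+: projW c d (lx ++ ly) := by
    intro c d hcd
    rw [projW_append, hE c d hcd]
    exact List.prefix_append _ _
  obtain ⟨m, hm⟩ := exists_meetW hsymm (lx ++ ly) hxp hup
  have hmx : (Trace.mk D m).Prefix (Trace.mk D lx) :=
    (prefix_iff_projW hrefl hsymm).mpr (fun c d hcd => ((hm c d hcd).1).1)
  have hmu : (Trace.mk D m).Prefix (Trace.mk D lu) :=
    (prefix_iff_projW hrefl hsymm).mpr (fun c d hcd => ((hm c d hcd).1).2)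
  obtain ⟨w₂, hw₂⟩ := hmx
  obtain ⟨w₃, hw₃⟩ := hmu
  obtain ⟨l2, rfl⟩ := exists_mk w₂
  obtain ⟨l3, rfl⟩ := exists_mk w₃
  have hx2 : ∀ c d, D c d → projW c d lx = projW c d m ++ projW c d l2 := by
    intro c d hcd
    have heq : Trace.mk D (m ++ l2) = Trace.mk D lx := by rw [← mk_mul, hw₂]
    have h1 := (mk_eq_iff_projW hrefl hsymm).mp heq c d hcd
    rw [projW_append] at h1
    exact h1.symm
  have hu3 : ∀ c d, D c d → projW c d lu = projW c d m ++ projW c d l3 := by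
    intro c d hcd
    have heq : Trace.mk D (m ++ l3) = Trace.mk D lu := by rw [← mk_mul, hw₃]
    have h1 := (mk_eq_iff_projW hrefl hsymm).mp heq c d hcd
    rw [projW_append] at h1
    exact h1.symm
  have hkey : ∀ c d, D c d → projW c d l2 = [] ∨ projW c d l3 = [] := by
    intro c d hcd
    rcases (hm c d hcd).2 with hd | hd
    · left
      have h1 := hx2 c d hcd
      rw [← hd] at h1
      exact List.append_right_eq_self.mp h1.symm
    · right
      have h1 := hu3 c d hcd
      rw [← hd] at h1
      exact List.append_right_eq_self.mp h1.symm
  have hind : Trace.Indep (Trace.mk D l2) (Trace.mk D l3) := by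
    intro e he f hf hDef
    rcases hkey e f hDef with hk | hk
    · have hmem : e ∈ projW e f l2 := mem_projW.mpr ⟨mem_alph_mk.mp he, Or.inl rfl⟩
      rw [hk] at hmem
      exact List.not_mem_nil hmem
    · have hmem : f ∈ projW e f l3 := mem_projW.mpr ⟨mem_alph_mk.mp hf, Or.inr rfl⟩
      rw [hk] at hmem
      exact List.not_mem_nil hmem
  have hcan : Trace.mk D l2 * Trace.mk D ly = Trace.mk D l3 * Trace.mk D lz := by
    apply mul_left_cancel' hrefl hsymm (u := Trace.mk D m)
    rw [← trace_mul_assoc, ← trace_mul_assoc, hw₂, hw₃]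
    exact h0
  have h3y : (Trace.mk D l3).Prefix (Trace.mk D ly) := by
    rw [prefix_iff_projW hrefl hsymm]
    intro c d hcd
    have hc2 : projW c d l2 ++ projW c d ly = projW c d l3 ++ projW c d lz := by
      have heq : Trace.mk D (l2 ++ ly) = Trace.mk D (l3 ++ lz) := by
        rw [← mk_mul, ← mk_mul, hcan]
      have h1 := (mk_eq_iff_projW hrefl hsymm).mp heq c d hcd
      rwa [projW_append, projW_append] at h1
    rcases hkey c d hcd with hk | hk
    · rw [hk, List.nil_append] at hc2
      exact ⟨projW c d lz, hc2.symm⟩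
    · rw [hk]
      exact List.nil_prefix
  obtain ⟨w₄, hw₄⟩ := h3y
  refine ⟨Trace.mk D m, Trace.mk D l2, Trace.mk D l3, w₄, hw₂.symm, hw₃.symm, hw₄.symm,
    ?_, hind⟩
  apply mul_left_cancel' hrefl hsymm (u := Trace.mk D l3)
  rw [← hcan, ← hw₄, ← trace_mul_assoc, ← trace_mul_assoc,
    commute_of_indep hrefl hsymm hind]

theorem exists_isView (B : Set A) (t : Trace D) : ∃ V, Trace.IsView B t V := by
  classical
  have hP : ∃ n : ℕ, ∃ x y : Trace D, x * y = t ∧ y.IndepSet B ∧ x.length = n :=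
    ⟨t.length, t, 1, trace_mul_one t, indepSet_one B, rfl⟩
  obtain ⟨x, y, hxy, hy, hlen⟩ := Nat.find_spec hP
  refine ⟨x, ⟨y, hxy, hy⟩, ?_⟩
  intro w' v' h1 h2
  rw [hlen]
  exact Nat.find_min' hP ⟨w', v', h1, h2, rfl⟩

theorem view_isView (B : Set A) (t : Trace D) : Trace.IsView B t (Trace.view B t) :=
  Classical.epsilon_spec (exists_isView B t)

theorem view_least (hrefl : ∀ a, D a a) (hsymm : ∀ a b, D a b → D b a)
    {B : Set A} {t V : Trace D} (hV : Trace.IsView B t V)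
    {x y : Trace D} (hxy : x * y = t) (hy : y.IndepSet B) : V.Prefix x := by
  obtain ⟨⟨r, hVr, hr⟩, hmin⟩ := hV
  obtain ⟨lV, rfl⟩ := exists_mk V
  obtain ⟨lr, rfl⟩ := exists_mk r
  obtain ⟨lx, rfl⟩ := exists_mk x
  obtain ⟨ly, rfl⟩ := exists_mk y
  have hE : ∀ c d, D c d → projW c d lx ++ projW c d ly = projW c d lV ++ projW c d lr := by
    intro c d hcd
    have heq : Trace.mk D (lx ++ ly) = Trace.mk D (lV ++ lr) := by
      rw [← mk_mul, ← mk_mul, hxy, hVr]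
    have h1 := (mk_eq_iff_projW hrefl hsymm).mp heq c d hcd
    rwa [projW_append, projW_append] at h1
  have hVp : ∀ c d, D c d → projW c d lV <+: projW c d (lV ++ lr) := by
    intro c d hcd
    rw [projW_append]
    exact List.prefix_append _ _
  have hxp : ∀ c d, D c d → projW c d lx <+: projW c d (lV ++ lr) := by
    intro c d hcd
    rw [projW_append, ← hE c d hcd]
    exact List.prefix_append _ _
  obtain ⟨m, hm⟩ := exists_meetW hsymm (lV ++ lr) hVp hxp
  have hmV : (Trace.mk D m).Prefix (Trace.mk D lV) :=
    (prefix_iff_projW hrefl hsymm).mpr (fun c d hcd => ((hm c d hcd).1).1)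
  have hmx : (Trace.mk D m).Prefix (Trace.mk D lx) :=
    (prefix_iff_projW hrefl hsymm).mpr (fun c d hcd => ((hm c d hcd).1).2)
  obtain ⟨q, hq⟩ := hmV
  obtain ⟨lq, rfl⟩ := exists_mk q
  have hVeq : ∀ c d, D c d → projW c d lV = projW c d m ++ projW c d lq := by
    intro c d hcd
    have heq : Trace.mk D (m ++ lq) = Trace.mk D lV := by rw [← mk_mul, hq]
    have h1 := (mk_eq_iff_projW hrefl hsymm).mp heq c d hcd
    rw [projW_append] at h1
    exact h1.symm
  have hrem : Trace.mk D m * (Trace.mk D lq * Trace.mk D lr) = t := by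
    rw [← trace_mul_assoc, hq, hVr]
  have hindep : (Trace.mk D lq * Trace.mk D lr).IndepSet B := by
    intro e he b hb
    rcases mem_alph_mul.mp he with he' | he'
    · have hmemq : e ∈ projW e e lq := mem_projW.mpr ⟨mem_alph_mk.mp he', Or.inl rfl⟩
      have hne : projW e e m ≠ projW e e lV := by
        intro hcontra
        have h1 := hVeq e e (hrefl e)
        rw [← hcontra] at h1
        have h2 : projW e e lq = [] := List.append_right_eq_self.mp h1.symm
        rw [h2] at hmemq
        exact List.not_mem_nil hmemq
      have hmx' : projW e e m = projW e e lx := ((hm e e (hrefl e)).2).resolve_left hne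
      have hEe := hE e e (hrefl e)
      rw [hVeq e e (hrefl e), ← hmx', List.append_assoc] at hEe
      have h2 : projW e e ly = projW e e lq ++ projW e e lr :=
        List.append_cancel_left hEe
      have h3 : e ∈ projW e e ly := by
        rw [h2]
        exact List.mem_append.mpr (Or.inl hmemq)
      exact hy e (mem_alph_mk.mpr (mem_projW.mp h3).1) b hb
    · exact hr e he' b hb
  have hlen := hmin _ _ hrem hindep
  have hlq : (Trace.mk D lq).length = 0 := by
    have h1 := congrArg Trace.length hq
    rw [length_mul] at h1
    omega
  have hq1 : Trace.mk D lq = 1 := eq_one_of_length_eq_zero hlq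
  rw [hq1, trace_mul_one] at hq
  rw [← hq]
  exact hmx

theorem prefix_view_iff (hrefl : ∀ a, D a a) (hsymm : ∀ a b, D a b → D b a)
    {B : Set A} {p t : Trace D} :
    p.Prefix (Trace.view B t) ↔
      ∀ x y : Trace D, x * y = t → y.IndepSet B → p.Prefix x := by
  constructor
  · intro hp x y hxy hy
    exact prefix_trans hp (view_least hrefl hsymm (view_isView B t) hxy hy)
  · intro h
    obtain ⟨⟨r, hr, hrB⟩, _⟩ := view_isView B t
    exact h _ _ hr hrB

end Aux

end MazTrace

open MazTrace in
/-- If `ua` is prime, then `uav ⊑ view_B(uavw)` iff `av ⊑ view_B(avw)`. -/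
theorem prefix_view_prime_iff {A : Type*} [Finite A] (D : A → A → Prop)
    (hrefl : ∀ a, D a a) (hsymm : ∀ a b, D a b → D b a)
    (B : Set A) (a : A) (u v w : Trace D)
    (hua : (u * Trace.mk D [a]).IsPrime) :
    (u * Trace.mk D [a] * v).Prefix (Trace.view B (u * Trace.mk D [a] * v * w)) ↔
      (Trace.mk D [a] * v).Prefix (Trace.view B (Trace.mk D [a] * v * w)) := by
  rw [prefix_view_iff hrefl hsymm, prefix_view_iff hrefl hsymm]
  constructor
  · intro H x y hxy hy
    have h1 : (u * x) * y = u * Trace.mk D [a] * v * w := by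
      rw [trace_mul_assoc u x y, hxy]
      simp only [← trace_mul_assoc]
    have h2 := H (u * x) y h1 hy
    have h3 : (u * (Trace.mk D [a] * v)).Prefix (u * x) := by
      rw [← trace_mul_assoc]
      exact h2
    exact (prefix_mul_left_iff hrefl hsymm).mp h3
  · intro H x y hxy hy
    have hxy' : x * y = u * (Trace.mk D [a] * v * w) := by
      rw [hxy]
      simp only [trace_mul_assoc]
    obtain ⟨n, w₂, w₃, w₄, hx, hu, hyw, hz, hind⟩ := trace_levi hrefl hsymm hxy'
    have hw₄ : w₄.IndepSet B := by
      intro e he b hb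
      exact hy e (by rw [hyw]; exact mem_alph_mul.mpr (Or.inr he)) b hb
    have hav : (Trace.mk D [a] * v).Prefix w₂ := H w₂ w₄ hz.symm hw₄
    have ha2 : a ∈ w₂.alph :=
      alph_subset_of_prefix hav
        (mem_alph_mul.mpr (Or.inl (mem_alph_mk.mpr (by simp : a ∈ [a]))))
    have hw3a : Trace.Indep w₃ (Trace.mk D [a]) := by
      intro e he f hf hDef
      have hfa : f = a := by simpa using mem_alph_mk.mp hf
      exact hind a ha2 e he (hsymm e a (hfa ▸ hDef))
    have hw3 : w₃ = 1 := by
      by_contra hne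
      obtain ⟨lg, hlg⟩ := exists_mk w₃
      have hgne : lg ≠ [] := by
        intro hnil
        rw [hnil] at hlg
        exact hne (by rw [← hlg]; rfl)
      obtain ⟨ln, hln⟩ := exists_mk n
      obtain ⟨lu2, hlu⟩ := exists_mk u
      have hcomm : Trace.mk D lg * Trace.mk D [a] = Trace.mk D [a] * Trace.mk D lg := by
        rw [hlg]
        exact commute_of_indep hrefl hsymm hw3a
      have h1 : Trace.mk D (ln ++ a :: lg) = u * Trace.mk D [a] := by
        rw [hu, ← hlg, ← hln, trace_mul_assoc, hcomm, ← trace_mul_assoc, mk_mul, mk_mul,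
          List.append_assoc]
        rfl
      have h2 : Trace.mk D (lu2 ++ [a]) = u * Trace.mk D [a] := by
        rw [← mk_mul, hlu]
      have hlast := hua (ln ++ a :: lg) (lu2 ++ [a]) h1 h2
      rw [List.getLast?_concat] at hlast
      have hlast2 : (a :: lg).getLast? = some a := by
        rw [← List.getLast?_append_of_ne_nil ln (by simp : a :: lg ≠ [])]
        exact hlast
      have hlast3 : lg.getLast? = some a := by
        rw [← List.getLast?_append_of_ne_nil [a] hgne]
        exact hlast2
      have hamem : a ∈ lg := by
        have := List.getLast?_eq_getLast hgne
        rw [hlast3] at this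
        have heq : a = lg.getLast hgne := Option.some.inj this
        rw [heq]
        exact List.getLast_mem hgne
      have haw3 : a ∈ w₃.alph := by
        rw [← hlg]
        exact mem_alph_mk.mpr hamem
      exact hind a ha2 a haw3 (hrefl a)
    rw [hw3, trace_mul_one] at hu
    rw [hx, ← hu]
    have h5 : (u * (Trace.mk D [a] * v)).Prefix (u * w₂) :=
      (prefix_mul_left_iff hrefl hsymm).mpr hav
    rw [← trace_mul_assoc] at h5
    exact h5
end
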